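/- Let A be an n×n Hermitian positive definite matrix with distinct eigenvalues λ₁ < λ₂ < ... < λ_ν (ν ≤ n). For ℓ < ν, let σ_ℓ = {λ₁,...,λ_{ν-ℓ}}, r_ℓ = λ_{ν-ℓ}/λ₁, q_ℓ = (√r_ℓ - 1)/(√r_ℓ + 1), C_ℓ = (1+√r_ℓ)²/(2λ_{ν-ℓ}). Then for all k ≥ ℓ, E_k(1/x, σ(A)) ≤ E_{k-ℓ}(1/x, σ_ℓ) ≤ C_ℓ · q_ℓ^{k+1-ℓ}, where E_k(f,S) is the best uniform polynomial approximation error of degree ≤ k on the finite set S. -/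

import Mathlib

open Matrix MeasureTheory Polynomial

noncomputable def approxErr (k : ℕ) (f : ℝ → ℝ) (S : Set ℝ) : ℝ :=
  ⨅ P : {P : Polynomial ℝ // P.degree ≤ (k : ℕ)}, ⨆ x : S, |f (x : ℝ) - P.1.eval (x : ℝ)|

lemma approxErr_le_of_poly (k : ℕ) (f : ℝ → ℝ) (S : Set ℝ) (B : ℝ) (hB : 0 ≤ B)
    (P : Polynomial ℝ) (hdeg : P.degree ≤ (k : ℕ))
    (h : ∀ x ∈ S, |f x - P.eval x| ≤ B) : approxErr k f S ≤ B := by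
  refine ciInf_le_of_le ⟨0, ?_⟩ ⟨P, hdeg⟩ (Real.iSup_le (fun x => h x x.2) hB)
  rintro y ⟨Q, rfl⟩
  exact Real.iSup_nonneg fun x => abs_nonneg _

namespace ChebHelpers
open Polynomial.Chebyshev

lemma T_natDegree_le : ∀ n : ℕ, (T ℝ (n : ℤ)).natDegree ≤ n
  | 0 => by simp [T_zero]
  | 1 => by simp [T_one]
  | (n+2) => by
    have h1 := T_natDegree_le (n+1)
    have h2 := T_natDegree_le n
    have hcast : ((n+2 : ℕ) : ℤ) = (n : ℤ) + 2 := by push_cast; ring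
    rw [hcast, T_add_two]
    refine (natDegree_sub_le _ _).trans (max_le ?_ (h2.trans (by omega)))
    refine (natDegree_mul_le).trans ?_
    have hX : (2 * X : ℝ[X]).natDegree ≤ 1 :=
      natDegree_mul_le.trans (by simp)
    have hcast2 : ((n+1 : ℕ) : ℤ) = (n : ℤ) + 1 := by push_cast; ring
    rw [← hcast2]
    omega

lemma T_eval_addinv (w : ℝ) (hw : w ≠ 0) :
    ∀ n : ℕ, (T ℝ (n : ℤ)).eval ((w + w⁻¹)/2) = (w^n + (w^n)⁻¹)/2
  | 0 => by simp [T_zero]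
  | 1 => by simp [T_one]
  | (n+2) => by
    have h1 := T_eval_addinv w hw (n+1)
    have h2 := T_eval_addinv w hw n
    have hcast : ((n+2 : ℕ) : ℤ) = (n : ℤ) + 2 := by push_cast; ring
    have hcast2 : ((n+1 : ℕ) : ℤ) = (n : ℤ) + 1 := by push_cast; ring
    rw [hcast, T_add_two]
    rw [← hcast2] at *
    simp only [eval_sub, eval_mul, eval_ofNat, eval_X, h1, h2]
    have hwn : w^n ≠ 0 := pow_ne_zero _ hw
    field_simp
    ring

lemma abs_bound (X Y Z c s : ℝ) (h : (X*c - Y*s)^2 + (X*s + Y*c)^2 = Z^2)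
    (hZ : 0 ≤ Z) : |X*c - Y*s| ≤ Z := by
  rw [abs_le]
  constructor <;> nlinarith [sq_nonneg (X*s + Y*c)]

lemma trig_key (A B θ φ : ℝ) :
    |A^2 * Real.cos (φ + θ) + 2*A*B*Real.cos φ + B^2 * Real.cos (φ - θ)| ≤
      A^2 + B^2 + 2*A*B*Real.cos θ := by
  set p := Real.cos (θ/2) with hpdef
  set r := Real.sin (θ/2) with hrdef
  set c := Real.cos φ with hcdef
  set s := Real.sin φ with hsdef
  have hp : p^2 + r^2 = 1 := Real.cos_sq_add_sin_sq _
  have hc : c^2 + s^2 = 1 := Real.cos_sq_add_sin_sq _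
  have hθ2 : θ = 2*(θ/2) := by ring
  have hcosθ : Real.cos θ = p^2 - r^2 := by
    rw [hθ2, Real.cos_two_mul]; rw [hpdef]; linarith [hp]
  have hsinθ : Real.sin θ = 2*p*r := by
    rw [hθ2, Real.sin_two_mul]; rw [hpdef, hrdef]; ring
  set X' := (A+B)^2*p^2 - (A-B)^2*r^2 with hX'
  set Y' := 2*(A^2-B^2)*p*r with hY'
  set Z' := (A+B)^2*p^2 + (A-B)^2*r^2 with hZ'
  have e1 : A^2 * Real.cos (φ + θ) + 2*A*B*Real.cos φ + B^2 * Real.cos (φ - θ)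
      = X'*c - Y'*s := by
    rw [Real.cos_add, Real.cos_sub, hcosθ, hsinθ, hX', hY', ← hcdef, ← hsdef]
    linear_combination (-2*A*B*c) * hp
  have e2 : A^2 + B^2 + 2*A*B*Real.cos θ = Z' := by
    rw [hcosθ, hZ']; linear_combination (-(A^2+B^2)) * hp
  rw [e1, e2]
  refine abs_bound X' Y' Z' c s ?_ (by positivity)
  linear_combination (X'^2 + Y'^2) * hc


lemma e0_identity (α β w W : ℝ) (hw : w ≠ 0) (hW : W ≠ 0) (hα : α ≠ 0)
    (hrel : α * w = -β) :
    α^2*((W*w + (W*w)⁻¹)/2) + 2*α*β*((W + W⁻¹)/2) + β^2*((W/w + w/W)/2)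
      = ((α^2-β^2)/α)^2/(2*(W*w)) := by
  have hβ : β = -(α*w) := by linarith
  subst hβ
  field_simp
  ring

lemma cheb_bound (a b : ℝ) (ha : 0 < a) (hab : a < b) (m : ℕ) :
    ∃ P : Polynomial ℝ, P.degree ≤ (m : ℕ) ∧ ∀ x, a ≤ x → x ≤ b →
      |1/x - P.eval x| ≤
        (Real.sqrt a + Real.sqrt b)^2 / (2*(a*b)) *
          ((Real.sqrt b - Real.sqrt a)/(Real.sqrt b + Real.sqrt a))^(m+1) := by
  have hb : (0:ℝ) < b := ha.trans hab
  set sa := Real.sqrt a with hsa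
  set sb := Real.sqrt b with hsb
  have hsa0 : 0 < sa := Real.sqrt_pos.mpr ha
  have hsb0 : 0 < sb := Real.sqrt_pos.mpr hb
  have hsab : sa < sb := by
    rw [hsa, hsb]; exact Real.sqrt_lt_sqrt ha.le hab
  have ha2 : sa^2 = a := Real.sq_sqrt ha.le
  have hb2 : sb^2 = b := Real.sq_sqrt hb.le
  set α := sa + sb with hα
  set β := sb - sa with hβ
  have hα0 : 0 < α := by positivity
  have hβ0 : 0 < β := by simp [hβ]; linarith
  set q := β / α with hq
  have hq0 : 0 < q := div_pos hβ0 hα0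
  set w : ℝ := -q with hw
  have hw0 : w ≠ 0 := by simp [hw]; positivity
  set t0 : ℝ := (w + w⁻¹)/2 with ht0
  set SS : Polynomial ℝ :=
    C (α^2) * T ℝ ((m : ℤ)+1) + C (2*α*β) * T ℝ (m : ℤ) + C (β^2) * T ℝ ((m : ℤ)-1)
      with hSS
  -- degree of SS
  have hTdeg1 : (T ℝ ((m:ℤ)+1)).natDegree ≤ m+1 := by
    have := T_natDegree_le (m+1)
    rwa [show ((m+1:ℕ):ℤ) = (m:ℤ)+1 by push_cast; ring] at this
  have hTdeg2 : (T ℝ (m:ℤ)).natDegree ≤ m+1 := (T_natDegree_le m).trans (by omega)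
  have hTdeg3 : (T ℝ ((m:ℤ)-1)).natDegree ≤ m+1 := by
    cases m with
    | zero => simpa [T_neg_one] using natDegree_X_le
    | succ m' =>
      have := T_natDegree_le m'
      rw [show ((m'+1:ℕ):ℤ)-1 = (m':ℤ) by push_cast; ring]
      omega
  have hSdeg : SS.natDegree ≤ m+1 := by
    rw [hSS]
    refine (natDegree_add_le _ _).trans (max_le ((natDegree_add_le _ _).trans
      (max_le ?_ ?_)) ?_) <;>
    · refine natDegree_mul_le.trans ?_
      simp only [natDegree_C, zero_add]
      assumption
  -- eval of SS at t0
  have hTev1 : (T ℝ ((m:ℤ)+1)).eval t0 = (w^(m+1) + (w^(m+1))⁻¹)/2 := by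
    have := T_eval_addinv w hw0 (m+1)
    rwa [show ((m+1:ℕ):ℤ) = (m:ℤ)+1 by push_cast; ring] at this
  have hTev2 : (T ℝ (m:ℤ)).eval t0 = (w^m + (w^m)⁻¹)/2 := T_eval_addinv w hw0 m
  have hTev3 : (T ℝ ((m:ℤ)-1)).eval t0 = (w^m/w + w/w^m)/2 := by
    cases m with
    | zero => simp [T_neg_one, ht0]; ring
    | succ m' =>
      have := T_eval_addinv w hw0 m'
      rw [show ((m'+1:ℕ):ℤ)-1 = (m':ℤ) by push_cast; ring, this]
      have hwn : w^m' ≠ 0 := pow_ne_zero _ hw0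
      rw [pow_succ]
      field_simp
  set e0 : ℝ := SS.eval t0 with he0def
  have hwm : w^m = (-1)^m * q^m := by rw [hw]; rw [neg_pow]
  have hqm : (0:ℝ) < q^m := pow_pos hq0 m
  obtain ⟨W, hWdef⟩ : ∃ W : ℝ, w^m = W := ⟨_, rfl⟩
  have hWne : W ≠ 0 := hWdef ▸ pow_ne_zero _ hw0
  rw [pow_succ, hWdef] at hTev1
  rw [hWdef] at hTev2 hTev3
  have hαn : α ≠ 0 := ne_of_gt hα0
  have hβn : β ≠ 0 := ne_of_gt hβ0
  have hrel : α * w = -β := by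
    rw [hw, hq]; field_simp
  have hstep : e0 = ((α^2 - β^2)/α)^2 / (2*(W*w)) := by
    rw [he0def, hSS]
    simp only [eval_add, eval_mul, eval_C, hTev1, hTev2, hTev3]
    linear_combination e0_identity α β w W hw0 hWne hαn hrel
  have hWw2 : W*w = (-1)^(m+1) * q^(m+1) := by
    rw [← hWdef, hwm, hw, pow_succ]; ring
  have he0 : e0 = (-1)^(m+1) * (((α^2-β^2)/α)^2 / (2*q^(m+1))) := by
    rcases Nat.even_or_odd (m+1) with hpar | hpar
    · rw [hstep, hWw2, hpar.neg_one_pow]; ring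
    · rw [hstep, hWw2, hpar.neg_one_pow, neg_one_mul, mul_neg, div_neg]; ring
  have hd : α^2 - β^2 = 4*(sa*sb) := by rw [hα, hβ]; ring
  have hdpos : (0:ℝ) < (α^2-β^2)/α := by rw [hd]; positivity
  have he00 : e0 ≠ 0 := by
    rw [he0]
    have h4 : (0:ℝ) < ((α^2-β^2)/α)^2 / (2*q^(m+1)) := by positivity
    rcases Nat.even_or_odd (m+1) with he | ho
    · rw [he.neg_one_pow]; linarith
    · rw [ho.neg_one_pow]; linarith
  have habs : |e0| = ((α^2-β^2)/α)^2 / (2*q^(m+1)) := by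
    rw [he0, abs_mul, abs_pow, abs_neg, abs_one, one_pow, one_mul]
    rw [abs_of_pos (by positivity)]
  -- the composed polynomial
  have hba : b - a ≠ 0 := by linarith
  set L : Polynomial ℝ := C (2/(b-a)) * X - C ((a+b)/(b-a)) with hL
  set R : Polynomial ℝ := C e0⁻¹ * (SS.comp L) with hR
  have hLdeg : L.natDegree ≤ 1 := by
    rw [hL]
    refine (natDegree_sub_le _ _).trans (max_le (natDegree_mul_le.trans ?_) ?_) <;>
      simp
  have hRdeg : R.natDegree ≤ m+1 := by
    rw [hR]
    refine natDegree_mul_le.trans ?_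
    simp only [natDegree_C, zero_add]
    refine natDegree_comp_le.trans ?_
    calc SS.natDegree * L.natDegree ≤ (m+1) * 1 := Nat.mul_le_mul hSdeg hLdeg
    _ = m+1 := by ring
  -- key algebraic facts
  have hαβprod : α * β = b - a := by rw [hα, hβ]; linear_combination hb2 - ha2
  have hsumsq : α^2 + β^2 = 2*(a+b) := by
    rw [hα, hβ]; linear_combination 2*ha2 + 2*hb2
  have ht0val : t0 = -((a+b)/(b-a)) := by
    rw [ht0, hw, hq, inv_neg, inv_div]
    have h1 : (-(β/α) + -(α/β))/2 = -((α^2+β^2)/(2*(α*β))) := by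
      field_simp; ring
    rw [h1, hsumsq, hαβprod]
    congr 1
    rw [mul_div_mul_left _ _ (two_ne_zero)]
  have hR0 : R.eval 0 = 1 := by
    rw [hR, eval_mul, eval_C, eval_comp, hL]
    simp only [eval_sub, eval_mul, eval_C, eval_X, mul_zero, zero_sub]
    rw [show -((a+b)/(b-a)) = t0 from ht0val.symm, ← he0def]
    exact inv_mul_cancel₀ he00
  -- P := (1 - R) /ₘ X
  set P : Polynomial ℝ := (C 1 - R) /ₘ X with hP
  have hXP : X * P = C 1 - R := by
    have hmod := modByMonic_add_div (C 1 - R) X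
    rw [modByMonic_X] at hmod
    simp only [eval_sub, eval_one, eval_C, hR0] at hmod
    rw [show (1:ℝ) - 1 = 0 by ring, C_0, zero_add] at hmod
    rw [hP]; exact hmod
  have hPdeg : P.degree ≤ (m : ℕ) := by
    refine degree_le_natDegree.trans ?_
    rw [hP, natDegree_divByMonic _ (monic_X (R := ℝ)), natDegree_X]
    have hCR : (C 1 - R).natDegree ≤ m+1 :=
      (natDegree_sub_le _ _).trans (by simpa using hRdeg)
    have hfin : (C 1 - R).natDegree - 1 ≤ m := by omega
    exact_mod_cast hfin
  refine ⟨P, hPdeg, fun x hax hxb => ?_⟩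
  have hx0 : 0 < x := lt_of_lt_of_le ha hax
  -- error identity
  have hxP : x * P.eval x = 1 - R.eval x := by
    have := congrArg (eval x) hXP
    simpa using this
  have herr : 1/x - P.eval x = R.eval x / x := by
    field_simp
    linear_combination -hxP
  -- bound |R.eval x|
  set t : ℝ := (2*x - (a+b))/(b-a) with htdef
  have hLev : L.eval x = t := by
    rw [hL]; simp only [eval_sub, eval_mul, eval_C, eval_X]
    rw [htdef]; ring
  have ht1 : -1 ≤ t := by
    rw [htdef, le_div_iff₀ (by linarith)]
    linarith
  have ht2 : t ≤ 1 := by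
    rw [htdef, div_le_one (by linarith)]
    linarith
  set θ := Real.arccos t with hθ
  have hcosθ : Real.cos θ = t := Real.cos_arccos ht1 ht2
  have hSev : SS.eval t = α^2 * Real.cos ((m:ℝ)*θ + θ) + 2*α*β*Real.cos ((m:ℝ)*θ)
      + β^2 * Real.cos ((m:ℝ)*θ - θ) := by
    rw [hSS]
    simp only [eval_add, eval_mul, eval_C]
    rw [← hcosθ, T_real_cos, T_real_cos, T_real_cos]
    push_cast
    ring_nf
  have hSbound : |SS.eval t| ≤ 4*x := by
    rw [hSev]
    refine (trig_key α β θ ((m:ℝ)*θ)).trans ?_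
    rw [hcosθ]
    have ht' : t * (b-a) = 2*x - (a+b) := by
      rw [htdef]; field_simp
    have : α^2 + β^2 + 2*α*β*t = 4*x := by
      linear_combination hsumsq + 2*t*hαβprod + 2*ht'
    linarith [this.le]
  have hRev : R.eval x = e0⁻¹ * SS.eval t := by
    rw [hR, eval_mul, eval_C, eval_comp, hLev]
  have hRbound : |R.eval x| ≤ |e0|⁻¹ * (4*x) := by
    rw [hRev, abs_mul, abs_inv]
    exact mul_le_mul_of_nonneg_left hSbound (by positivity)
  -- final
  rw [herr, abs_div, abs_of_pos hx0]
  rw [div_le_iff₀ hx0]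
  refine hRbound.trans ?_
  rw [habs]
  have h4ab : ((α^2-β^2)/α)^2 = 16*(a*b)/α^2 := by
    rw [hd, div_pow]
    congr 1
    linear_combination (16*sb^2)*ha2 + (16*a)*hb2
  rw [h4ab]
  have hqpow : (0:ℝ) < q^(m+1) := pow_pos hq0 _
  have hab0 : (0:ℝ) < a*b := by positivity
  have key : (16*(a*b)/α^2 / (2*q^(m+1)))⁻¹ * (4*x) = α^2/(2*(a*b)) * q^(m+1) * x := by
    field_simp
    ring
  rw [key, hq, hβ, hα]
  ring_nf
  rfl

end ChebHelpers


/-- Superlinear polynomial approximation bound for 1/x on the spectrum of a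
Hermitian positive definite matrix with distinct eigenvalues λ₁ < ... < λ_ν. -/
theorem inverse_approx_superlinear {n ν : ℕ} (A : Matrix (Fin n) (Fin n) ℂ)
    (hA : A.IsHermitian) (hPD : ∀ i, 0 < hA.eigenvalues i)
    (lam : Fin ν → ℝ) (hmono : StrictMono lam)
    (hspec : Set.range hA.eigenvalues = Set.range lam)
    (ℓ k : ℕ) (hℓ : ℓ < ν) (hk : ℓ ≤ k) :
    approxErr k (fun x => 1 / x) (Set.range hA.eigenvalues) ≤
        approxErr (k - ℓ) (fun x => 1 / x) (lam '' {i : Fin ν | (i : ℕ) < ν - ℓ}) ∧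
      approxErr (k - ℓ) (fun x => 1 / x) (lam '' {i : Fin ν | (i : ℕ) < ν - ℓ}) ≤
        (1 + Real.sqrt (lam ⟨ν - ℓ - 1, by omega⟩ / lam ⟨0, by omega⟩))^2 /
            (2 * lam ⟨ν - ℓ - 1, by omega⟩) *
          ((Real.sqrt (lam ⟨ν - ℓ - 1, by omega⟩ / lam ⟨0, by omega⟩) - 1) /
              (Real.sqrt (lam ⟨ν - ℓ - 1, by omega⟩ / lam ⟨0, by omega⟩) + 1)) ^
            (k + 1 - ℓ) := by

  have hν : 0 < ν := by omega
  have hlampos : ∀ i, 0 < lam i := by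
    intro i
    have hmem : lam i ∈ Set.range lam := ⟨i, rfl⟩
    rw [← hspec] at hmem
    obtain ⟨j, hj⟩ := hmem
    exact hj ▸ hPD j
  set σ : Set ℝ := lam '' {i : Fin ν | (i : ℕ) < ν - ℓ} with hσ
  have hσfin : σ.Finite := (Set.toFinite _).image lam
  constructor
  · -- first inequality
    haveI : Nonempty {P : Polynomial ℝ // P.degree ≤ ((k-ℓ:ℕ) : ℕ)} :=
      ⟨⟨0, by simp⟩⟩
    show approxErr k (fun x => 1 / x) (Set.range hA.eigenvalues) ≤
      ⨅ P : {P : Polynomial ℝ // P.degree ≤ ((k - ℓ : ℕ) : ℕ)},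
        ⨆ x : σ, |1/(x:ℝ) - P.1.eval (x:ℝ)|
    refine le_ciInf fun Q => ?_
    set B := ⨆ x : σ, |1/(x:ℝ) - Q.1.eval (x:ℝ)| with hB
    have hB0 : 0 ≤ B := Real.iSup_nonneg fun x => abs_nonneg _
    haveI : Finite σ := hσfin.to_subtype
    have hBle : ∀ y ∈ σ, |1/y - Q.1.eval y| ≤ B := by
      intro y hy
      rw [hB]
      have hbdd : BddAbove (Set.range fun x : σ => |1/(x:ℝ) - Q.1.eval (x:ℝ)|) :=
        Set.Finite.bddAbove (Set.finite_range _)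
      exact le_ciSup hbdd (⟨y, hy⟩ : σ)
    -- construct polynomial
    set Rp : Polynomial ℝ :=
      ∏ j : Fin ℓ, (1 - C (lam ⟨ν - ℓ + (j:ℕ), by omega⟩)⁻¹ * X) with hRp
    have hRdeg : Rp.natDegree ≤ ℓ := by
      rw [hRp]
      refine (natDegree_prod_le _ _).trans ?_
      have hfac : ∀ j : Fin ℓ,
          (1 - C (lam ⟨ν - ℓ + (j:ℕ), by omega⟩)⁻¹ * X).natDegree ≤ 1 := by
        intro j
        refine (natDegree_sub_le _ _).trans (max_le (by simp) ?_)
        exact natDegree_mul_le.trans (by simp)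
      refine le_trans (Finset.sum_le_sum fun j _ => hfac j) (by simp)
    have hR0 : Rp.eval 0 = 1 := by
      rw [hRp, eval_prod]
      refine Finset.prod_eq_one fun j _ => ?_
      simp
    set D : Polynomial ℝ := (C 1 - Rp) /ₘ X with hD
    have hXD : X * D = C 1 - Rp := by
      have hmod := modByMonic_add_div (C 1 - Rp) X
      rw [modByMonic_X] at hmod
      simp only [eval_sub, eval_one, eval_C, hR0] at hmod
      rw [show (1:ℝ) - 1 = 0 by ring, C_0, zero_add] at hmod
      exact hmod
    set P : Polynomial ℝ := D + Rp * Q.1 with hP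
    have hPdeg : P.degree ≤ (k : ℕ) := by
      rw [hP]
      refine (degree_add_le _ _).trans (max_le ?_ ?_)
      · refine degree_le_natDegree.trans ?_
        rw [hD, natDegree_divByMonic _ (monic_X (R := ℝ)), natDegree_X]
        have hCR : (C 1 - Rp).natDegree ≤ ℓ :=
          (natDegree_sub_le _ _).trans (by simpa using hRdeg)
        have hfin : (C 1 - Rp).natDegree - 1 ≤ k := by omega
        exact_mod_cast hfin
      · refine (degree_mul_le _ _).trans ?_
        have h1 : Rp.degree ≤ (ℓ : ℕ) :=
          degree_le_natDegree.trans (by exact_mod_cast hRdeg)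
        have h2 : Q.1.degree ≤ ((k - ℓ : ℕ) : ℕ) := Q.2
        refine (add_le_add h1 h2).trans ?_
        rw [← Nat.cast_add]
        exact Nat.cast_le.mpr (by omega)
    refine approxErr_le_of_poly k _ _ B hB0 P hPdeg ?_
    intro x hx
    rw [hspec] at hx
    obtain ⟨i, rfl⟩ := hx
    have hx0 : lam i ≠ 0 := ne_of_gt (hlampos i)
    have hXDi : lam i * D.eval (lam i) = 1 - Rp.eval (lam i) := by
      have := congrArg (eval (lam i)) hXD
      simpa using this
    have herr : 1/(lam i) - P.eval (lam i)
        = Rp.eval (lam i) * (1/(lam i) - Q.1.eval (lam i)) := by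
      rw [hP, eval_add, eval_mul]
      field_simp
      linear_combination -hXDi
    show |1 / lam i - P.eval (lam i)| ≤ B
    rw [herr]
    by_cases hi : (i : ℕ) < ν - ℓ
    · have hyσ : lam i ∈ σ := ⟨i, hi, rfl⟩
      have hRle : |Rp.eval (lam i)| ≤ 1 := by
        rw [hRp, eval_prod, Finset.abs_prod]
        refine Finset.prod_le_one (fun j _ => abs_nonneg _) fun j _ => ?_
        simp only [eval_sub, eval_one, eval_mul, eval_C, eval_X]
        have hlt : lam i < lam ⟨ν - ℓ + (j:ℕ), by omega⟩ := by
          apply hmono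
          rw [Fin.lt_def]
          simp
          omega
        have hpos := hlampos ⟨ν - ℓ + (j:ℕ), by omega⟩
        have hle1 : (lam ⟨ν - ℓ + (j:ℕ), by omega⟩)⁻¹ * lam i ≤ 1 := by
          rw [inv_mul_eq_div]
          exact (div_le_one hpos).mpr hlt.le
        have hge0 : (0:ℝ) ≤ (lam ⟨ν - ℓ + (j:ℕ), by omega⟩)⁻¹ * lam i := by
          have := (hlampos i).le
          positivity
        rw [abs_of_nonneg (by linarith)]
        linarith
      calc |Rp.eval (lam i) * (1/(lam i) - Q.1.eval (lam i))|
          = |Rp.eval (lam i)| * |1/(lam i) - Q.1.eval (lam i)| := abs_mul _ _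
        _ ≤ 1 * B := mul_le_mul hRle (hBle _ hyσ) (abs_nonneg _) zero_le_one
        _ = B := one_mul B
    · have hR00 : Rp.eval (lam i) = 0 := by
        rw [hRp, eval_prod]
        refine Finset.prod_eq_zero (Finset.mem_univ
          (⟨(i:ℕ) - (ν - ℓ), by omega⟩ : Fin ℓ)) ?_
        have hidx : (⟨ν - ℓ + ((i:ℕ) - (ν - ℓ)), by omega⟩ : Fin ν) = i := by
          apply Fin.ext
          simp
          omega
        simp only [eval_sub, eval_one, eval_mul, eval_C, eval_X, hidx]
        rw [inv_mul_cancel₀ hx0]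
        ring
      rw [hR00, zero_mul, abs_zero]
      exact hB0
  · -- second inequality
    have hx0 : (0:ℝ) < lam ⟨0, by omega⟩ := hlampos _
    by_cases hcase : ν - ℓ = 1
    · -- degenerate case
      have hidx : (⟨ν - ℓ - 1, by omega⟩ : Fin ν) = ⟨0, by omega⟩ := by
        apply Fin.ext; simp; omega
      rw [hidx]
      have hone : Real.sqrt (lam ⟨0, by omega⟩ / lam ⟨0, by omega⟩) = 1 := by
        rw [div_self (ne_of_gt hx0), Real.sqrt_one]
      rw [hone]
      have : ((1:ℝ) - 1) / (1 + 1) = 0 := by norm_num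
      rw [this]
      rw [zero_pow (by omega : k + 1 - ℓ ≠ 0), mul_zero]
      refine approxErr_le_of_poly _ _ _ 0 le_rfl (C (lam ⟨0, by omega⟩)⁻¹)
        (by simpa using degree_C_le.trans (by exact_mod_cast Nat.zero_le _)) ?_
      rintro x ⟨i, hi, rfl⟩
      have : i = (⟨0, by omega⟩ : Fin ν) := by
        apply Fin.ext; simp at hi ⊢; omega
      subst this
      simp [one_div]
    · -- main case
      have h2 : 2 ≤ ν - ℓ := by omega
      set a := lam ⟨0, by omega⟩ with ha
      set b := lam ⟨ν - ℓ - 1, by omega⟩ with hb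
      have hab : a < b := by
        apply hmono
        rw [Fin.lt_def]
        simp
        omega
      have hb0 : (0:ℝ) < b := hlampos _
      obtain ⟨P, hPdeg, hPbound⟩ := ChebHelpers.cheb_bound a b hx0 hab (k - ℓ)
      have hsa0 : (0:ℝ) < Real.sqrt a := Real.sqrt_pos.mpr hx0
      have hsb0 : (0:ℝ) < Real.sqrt b := Real.sqrt_pos.mpr hb0
      have hsd : Real.sqrt (b / a) = Real.sqrt b / Real.sqrt a :=
        Real.sqrt_div hb0.le a
      have hqs : (Real.sqrt (b/a) - 1)/(Real.sqrt (b/a) + 1)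
          = (Real.sqrt b - Real.sqrt a)/(Real.sqrt b + Real.sqrt a) := by
        rw [hsd, div_eq_div_iff (by positivity) (by positivity)]
        field_simp
      have hCs : (1 + Real.sqrt (b/a))^2/(2*b)
          = (Real.sqrt a + Real.sqrt b)^2/(2*(a*b)) := by
        rw [hsd, div_eq_div_iff (by positivity) (by positivity)]
        have ha2 : Real.sqrt a ^ 2 = a := Real.sq_sqrt hx0.le
        field_simp
        nlinarith [ha2]
      have hexp : k + 1 - ℓ = (k - ℓ) + 1 := by omega
      rw [hexp, hqs, hCs]
      have hsale : Real.sqrt a ≤ Real.sqrt b := Real.sqrt_le_sqrt hab.le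
      have hq0 : 0 ≤ (Real.sqrt b - Real.sqrt a)/(Real.sqrt b + Real.sqrt a) :=
        div_nonneg (by linarith) (by positivity)
      have hC0 : 0 ≤ (Real.sqrt a + Real.sqrt b)^2/(2*(a*b)) := by positivity
      refine approxErr_le_of_poly _ _ _ _
        (mul_nonneg hC0 (pow_nonneg hq0 _)) P hPdeg ?_
      rintro x ⟨i, hi, rfl⟩
      have hal : a ≤ lam i := by
        rw [ha]
        exact hmono.monotone (by rw [Fin.le_def]; simp)
      have hbl : lam i ≤ b := by
        rw [hb]
        refine hmono.monotone ?_
        rw [Fin.le_def]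
        simp only [Set.mem_setOf_eq] at hi
        simp
        omega
      exact hPbound _ hal hbl
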